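/- Let f : ℂ → ℂ be analytic on the open lower half plane {z : Im z < 0}, continuous on the closed lower half plane, bounded there by a constant C̃, and suppose there exist constants c, c̃ > 0 such that |f(k)| ≤ c̃·e^{-c|k|} for all real k. Then f(z) = 0 for every z with Im z ≤ 0. -/

import Mathlib

open Complex Set MeasureTheory Filter Topology

local notation "expR" => Real.exp


private lemma integrable_exp_neg_mul_abs' {a : ℝ} (ha : 0 < a) :
    Integrable (fun x : ℝ => expR (-a * |x|)) := by
  have h1 : IntegrableOn (fun x : ℝ => expR (-a * |x|)) (Ici 0) := by
    rw [integrableOn_Ici_iff_integrableOn_Ioi]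
    exact (exp_neg_integrableOn_Ioi 0 ha).congr_fun
      (fun x hx => by rw [abs_of_pos hx]) measurableSet_Ioi
  have h2 : IntegrableOn (fun x : ℝ => expR (-a * |x|)) (Iic 0) := by
    have h3 := (MeasurePreserving.integrableOn_comp_preimage
      (Measure.measurePreserving_neg (volume : Measure ℝ))
      (Homeomorph.neg ℝ).measurableEmbedding).2 h1
    have h4 : (Neg.neg ⁻¹' Ici (0:ℝ)) = Iic 0 := by ext x; simp
    rw [h4] at h3
    exact h3.congr_fun (fun x hx => by simp [Function.comp, abs_neg]) measurableSet_Iic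
  have h5 := h2.union h1
  rwa [Iic_union_Ici, integrableOn_univ] at h5


private lemma key_decay (f : ℂ → ℂ) (Ctil c ctil : ℝ)
    (hc : 0 < c)
    (hdiff : DifferentiableOn ℂ f {z : ℂ | z.im < 0})
    (hcont : ContinuousOn f {z : ℂ | z.im ≤ 0})
    (hbound : ∀ z : ℂ, z.im ≤ 0 → ‖f z‖ ≤ Ctil)
    (hdecay : ∀ k : ℝ, ‖f (k : ℂ)‖ ≤ ctil * Real.exp (-c * |k|)) :
    ∀ z : ℂ, z.im ≤ 0 → ‖f z‖ ≤ max ctil Ctil * expR (-c * |z.re|) := by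
  set M := max ctil Ctil with hM
  have hCtil0 : (0:ℝ) ≤ Ctil := le_trans (norm_nonneg _) (hbound 0 (by simp))
  have hMC : Ctil ≤ M := le_max_right _ _
  have hMc : ctil ≤ M := le_max_left _ _
  -- Quadrant IV : g z = exp (c z) * f z
  have hQ4 : ∀ z : ℂ, 0 ≤ z.re → z.im ≤ 0 → ‖Complex.exp (c * z) * f z‖ ≤ M := by
    intro z hre him
    refine PhragmenLindelof.quadrant_IV (f := fun z => Complex.exp (c * z) * f z) ?_ ?_ ?_ ?_ hre him
    · constructor
      · apply DifferentiableOn.mul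
        · exact (Complex.differentiable_exp.comp ((differentiable_const _).mul differentiable_id)).differentiableOn
        · refine hdiff.mono fun w hw => ?_
          rw [mem_reProdIm] at hw
          exact hw.2
      · refine ContinuousOn.mul ?_ ?_
        · exact (Complex.continuous_exp.comp ((continuous_const).mul continuous_id)).continuousOn
        · refine hcont.mono ?_
          rw [closure_reProdIm, closure_Ioi, closure_Iio]
          intro w hw
          rw [mem_reProdIm] at hw
          exact hw.2
    · refine ⟨1, one_lt_two, c, Asymptotics.IsBigO.of_bound Ctil ?_⟩
      refine Filter.eventually_inf_principal.2 (Filter.Eventually.of_forall fun z hz => ?_)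
      rw [mem_reProdIm] at hz
      have him : z.im ≤ 0 := le_of_lt hz.2
      have : ‖Complex.exp (↑c * z) * f z‖ = expR ((↑c * z).re) * ‖f z‖ := by
        rw [norm_mul, Complex.norm_exp]
      rw [this]
      have hre' : (↑c * z).re = c * z.re := by simp
      have h1 : expR ((↑c * z).re) ≤ expR (c * ‖z‖) := by
        rw [hre']
        exact Real.exp_le_exp.2 (by
          have := Complex.re_le_norm z
          nlinarith [norm_nonneg z])
      have h2 : ‖f z‖ ≤ Ctil := hbound z him
      calc expR ((↑c * z).re) * ‖f z‖ ≤ expR (c * ‖z‖) * Ctil := by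
            apply mul_le_mul h1 h2 (norm_nonneg _) (le_of_lt (Real.exp_pos _))
        _ = Ctil * ‖expR (c * ‖z‖ ^ (1:ℝ))‖ := by
            rw [Real.rpow_one, Real.norm_eq_abs, abs_of_pos (Real.exp_pos _), mul_comm]
    · intro x hx
      have : ‖Complex.exp (↑c * ↑x) * f ↑x‖ = expR (c * x) * ‖f ↑x‖ := by
        rw [norm_mul, Complex.norm_exp]
        norm_num
      rw [this]
      calc expR (c * x) * ‖f ↑x‖ ≤ expR (c * x) * (ctil * expR (-c * |x|)) := by
            exact mul_le_mul_of_nonneg_left (hdecay x) (le_of_lt (Real.exp_pos _))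
        _ = ctil * expR (c * x + -c * |x|) := by rw [Real.exp_add]; ring
        _ = ctil := by rw [_root_.abs_of_nonneg hx]; ring_nf; rw [Real.exp_zero]; ring
        _ ≤ M := hMc
    · intro x hx
      have : ‖Complex.exp (↑c * (↑x * I)) * f (↑x * I)‖ = expR 0 * ‖f (↑x * I)‖ := by
        rw [norm_mul, Complex.norm_exp]
        norm_num
      rw [this, Real.exp_zero, one_mul]
      exact le_trans (hbound _ (by simp [hx])) hMC
  -- Quadrant III : g z = exp (-c z) * f z
  have hQ3 : ∀ z : ℂ, z.re ≤ 0 → z.im ≤ 0 → ‖Complex.exp (((-c : ℝ) : ℂ) * z) * f z‖ ≤ M := by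
    intro z hre him
    refine PhragmenLindelof.quadrant_III (f := fun z => Complex.exp (((-c : ℝ) : ℂ) * z) * f z) ?_ ?_ ?_ ?_ hre him
    · constructor
      · apply DifferentiableOn.mul
        · exact (Complex.differentiable_exp.comp ((differentiable_const _).mul differentiable_id)).differentiableOn
        · refine hdiff.mono fun w hw => ?_
          rw [mem_reProdIm] at hw
          exact hw.2
      · refine ContinuousOn.mul ?_ ?_
        · exact (Complex.continuous_exp.comp ((continuous_const).mul continuous_id)).continuousOn
        · refine hcont.mono ?_
          rw [closure_reProdIm, closure_Iio]
          intro w hw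
          rw [mem_reProdIm] at hw
          exact hw.2
    · refine ⟨1, one_lt_two, c, Asymptotics.IsBigO.of_bound Ctil ?_⟩
      refine Filter.eventually_inf_principal.2 (Filter.Eventually.of_forall fun z hz => ?_)
      rw [mem_reProdIm] at hz
      have him : z.im ≤ 0 := le_of_lt hz.2
      show ‖Complex.exp (↑(-c) * z) * f z‖ ≤ Ctil * ‖expR (c * ‖z‖ ^ (1:ℝ))‖
      have hnorm : ‖Complex.exp (↑(-c) * z) * f z‖ = expR ((↑(-c) * z).re) * ‖f z‖ := by
        rw [norm_mul, Complex.norm_exp]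
      rw [hnorm]
      have hre' : (↑(-c) * z).re = -c * z.re := by simp
      have h1 : expR ((↑(-c) * z).re) ≤ expR (c * ‖z‖) := by
        rw [hre']
        refine Real.exp_le_exp.2 ?_
        have h3 : -z.re ≤ ‖z‖ := by
          have := Complex.abs_re_le_norm z
          cases' abs_cases z.re with h h <;> linarith
        nlinarith [norm_nonneg z]
      have h2 : ‖f z‖ ≤ Ctil := hbound z him
      calc expR ((↑(-c) * z).re) * ‖f z‖ ≤ expR (c * ‖z‖) * Ctil := by
            apply mul_le_mul h1 h2 (norm_nonneg _) (le_of_lt (Real.exp_pos _))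
        _ = Ctil * ‖expR (c * ‖z‖ ^ (1:ℝ))‖ := by
            rw [Real.rpow_one, Real.norm_eq_abs, abs_of_pos (Real.exp_pos _), mul_comm]
    · intro x hx
      show ‖Complex.exp (↑(-c) * ↑x) * f ↑x‖ ≤ M
      have hnorm : ‖Complex.exp (↑(-c) * ↑x) * f ↑x‖ = expR (-c * x) * ‖f ↑x‖ := by
        rw [norm_mul, Complex.norm_exp]
        norm_num
      rw [hnorm]
      calc expR (-c * x) * ‖f ↑x‖ ≤ expR (-c * x) * (ctil * expR (-c * |x|)) := by
            exact mul_le_mul_of_nonneg_left (hdecay x) (le_of_lt (Real.exp_pos _))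
        _ = ctil * expR (-c * x + -c * |x|) := by rw [Real.exp_add]; ring
        _ = ctil := by rw [abs_of_nonpos hx]; ring_nf; rw [Real.exp_zero]; ring
        _ ≤ M := hMc
    · intro x hx
      show ‖Complex.exp (↑(-c) * (↑x * I)) * f (↑x * I)‖ ≤ M
      have hnorm : ‖Complex.exp (↑(-c) * (↑x * I)) * f (↑x * I)‖ = expR 0 * ‖f (↑x * I)‖ := by
        rw [norm_mul, Complex.norm_exp]
        norm_num
      rw [hnorm, Real.exp_zero, one_mul]
      exact le_trans (hbound _ (by simp [hx])) hMC
  have hdiv : ∀ (z : ℂ) (t : ℝ), expR t * ‖f z‖ ≤ M → ‖f z‖ ≤ M * expR (-t) := by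
    intro z t h
    have h2 := mul_le_mul_of_nonneg_right h (le_of_lt (Real.exp_pos (-t)))
    rwa [mul_assoc, mul_comm (‖f z‖), ← mul_assoc, ← Real.exp_add, add_neg_cancel,
      Real.exp_zero, one_mul] at h2
  intro z him
  rcases le_or_gt 0 z.re with hre | hre
  · have h := hQ4 z hre him
    rw [norm_mul, Complex.norm_exp] at h
    have hre2 : (↑c * z).re = c * z.re := by simp
    rw [hre2] at h
    rw [_root_.abs_of_nonneg hre]
    have := hdiv z (c * z.re) h
    rwa [← neg_mul] at this
  · have h := hQ3 z (le_of_lt hre) him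
    rw [norm_mul, Complex.norm_exp] at h
    have hre2 : ((↑(-c) : ℂ) * z).re = -c * z.re := by simp
    rw [hre2] at h
    rw [_root_.abs_of_neg hre]
    have := hdiv z (-c * z.re) h
    rw [neg_mul, neg_neg] at this
    rwa [mul_neg, neg_mul, neg_neg]


private lemma contour_shift (f : ℂ → ℂ) (M c ξ : ℝ) (hc : 0 < c) (hM : 0 ≤ M)
    (hdiff : DifferentiableOn ℂ f {z : ℂ | z.im < 0})
    (hcont : ContinuousOn f {z : ℂ | z.im ≤ 0})
    (hkey : ∀ z : ℂ, z.im ≤ 0 → ‖f z‖ ≤ M * expR (-c * |z.re|))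
    (hexpint : Integrable (fun x : ℝ => expR (-c * |x|)))
    (y1 y2 : ℝ) (hy1 : y1 ≤ 0) (hy21 : y2 ≤ y1) :
    (∫ x : ℝ, f (x + y1*I) * Complex.exp (-I * ξ * (x + y1*I))) =
    ∫ x : ℝ, f (x + y2*I) * Complex.exp (-I * ξ * (x + y2*I)) := by
  have hy2 : y2 ≤ 0 := le_trans hy21 hy1
  set g : ℂ → ℂ := fun z => f z * Complex.exp (-I * ξ * z) with hg
  have hgre : ∀ z : ℂ, (-I * ξ * z).re = ξ * z.im := by
    intro z; simp [Complex.mul_re, Complex.mul_im]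
  have hgnorm : ∀ z : ℂ, ‖g z‖ = ‖f z‖ * expR (ξ * z.im) := by
    intro z
    rw [hg, norm_mul, Complex.norm_exp, hgre]
  have hgd : DifferentiableOn ℂ g {z : ℂ | z.im < 0} := by
    apply hdiff.mul
    exact (Complex.differentiable_exp.comp ((differentiable_const _).mul differentiable_id)).differentiableOn
  have hgc : ContinuousOn g {z : ℂ | z.im ≤ 0} := by
    apply hcont.mul
    exact (Complex.continuous_exp.comp ((continuous_const).mul continuous_id)).continuousOn
  -- integrability on horizontal lines
  have hInt : ∀ y : ℝ, y ≤ 0 → Integrable (fun x : ℝ => g (x + y*I)) := by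
    intro y hy
    have hmeas : Continuous (fun x : ℝ => g (x + y*I)) := by
      apply hgc.comp_continuous
      · exact Continuous.add (Complex.continuous_ofReal) continuous_const
      · intro x; simp [hy]
    refine Integrable.mono' ((hexpint.const_mul (M * expR (ξ * y)))) hmeas.aestronglyMeasurable ?_
    refine Filter.Eventually.of_forall fun x => ?_
    rw [hgnorm]
    have h1 : (↑x + ↑y*I).im = y := by simp
    have h2 : (↑x + ↑y*I).re = x := by simp
    rw [h1]
    calc ‖f (↑x + ↑y*I)‖ * expR (ξ * y)
        ≤ (M * expR (-c * |x|)) * expR (ξ * y) := by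
          apply mul_le_mul_of_nonneg_right _ (le_of_lt (Real.exp_pos _))
          have := hkey (↑x + ↑y*I) (by rw [h1]; exact hy)
          rwa [h2] at this
      _ = M * expR (ξ * y) * expR (-c * |x|) := by ring
  -- rectangle identity
  have key : ∀ R : ℝ, 0 ≤ R →
      (∫ x in (-R)..R, g (x + y2*I)) - (∫ x in (-R)..R, g (x + y1*I)) +
        I • (∫ y in y2..y1, g ((R:ℝ) + y*I)) - I • (∫ y in y2..y1, g ((↑(-R:ℝ)) + y*I)) = 0 := by
    intro R hR
    have h := integral_boundary_rect_eq_zero_of_continuousOn_of_differentiableOn g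
      ⟨-R, y2⟩ ⟨R, y1⟩ ?_ ?_
    · exact h
    · refine hgc.mono fun w hw => ?_
      rw [mem_reProdIm] at hw
      have := hw.2
      rw [show (Complex.mk (-R) y2).im = y2 from rfl, show (Complex.mk R y1).im = y1 from rfl,
        Set.uIcc_of_le hy21] at this
      exact le_trans this.2 hy1
    · refine hgd.mono fun w hw => ?_
      rw [mem_reProdIm] at hw
      have := hw.2
      rw [show (Complex.mk (-R) y2).im = y2 from rfl, show (Complex.mk R y1).im = y1 from rfl] at this
      exact lt_of_lt_of_le this.2 (le_trans (max_le hy2 hy1) le_rfl)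
  -- limits
  have T1 : Tendsto (fun R : ℝ => ∫ x in (-R)..R, g (x + y1*I)) atTop
      (𝓝 (∫ x : ℝ, g (x + y1*I))) :=
    intervalIntegral_tendsto_integral (hInt y1 hy1) tendsto_neg_atTop_atBot tendsto_id
  have T2 : Tendsto (fun R : ℝ => ∫ x in (-R)..R, g (x + y2*I)) atTop
      (𝓝 (∫ x : ℝ, g (x + y2*I))) :=
    intervalIntegral_tendsto_integral (hInt y2 hy2) tendsto_neg_atTop_atBot tendsto_id
  have hSideBound : ∀ (R : ℝ), 0 ≤ R → ∀ s : ℝ, |s| = R →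
      ‖∫ y in y2..y1, g (s + y*I)‖ ≤ M * expR (|ξ| * -y2) * expR (-c * R) * |y1 - y2| := by
    intro R hR s hs
    apply intervalIntegral.norm_integral_le_of_norm_le_const
    intro y hy
    rw [Set.uIoc_of_le hy21] at hy
    rw [hgnorm]
    have h1 : (↑s + ↑y*I).im = y := by simp
    have h2 : (↑s + ↑y*I).re = s := by simp
    rw [h1]
    have hf := hkey (↑s + ↑y*I) (by rw [h1]; exact le_trans hy.2 hy1)
    rw [h2, hs] at hf
    have hexp : expR (ξ * y) ≤ expR (|ξ| * -y2) := by
      apply Real.exp_le_exp.2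
      calc ξ * y ≤ |ξ * y| := le_abs_self _
        _ = |ξ| * |y| := abs_mul _ _
        _ ≤ |ξ| * -y2 := by
            apply mul_le_mul_of_nonneg_left _ (abs_nonneg _)
            rw [abs_of_nonpos (le_trans hy.2 hy1)]
            linarith [hy.1]
    calc ‖f (↑s + ↑y*I)‖ * expR (ξ * y) ≤ (M * expR (-c * R)) * expR (|ξ| * -y2) := by
          apply mul_le_mul hf hexp (le_of_lt (Real.exp_pos _))
          positivity
      _ = M * expR (|ξ| * -y2) * expR (-c * R) := by ring
  have hzero : Tendsto (fun R : ℝ => M * expR (|ξ| * -y2) * expR (-c * R) * |y1 - y2|)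
      atTop (𝓝 0) := by
    have h0 : Tendsto (fun R : ℝ => expR (-c * R)) atTop (𝓝 0) := by
      apply Real.tendsto_exp_atBot.comp
      exact Tendsto.const_mul_atTop_of_neg (neg_lt_zero.2 hc) tendsto_id
    have := (h0.const_mul (M * expR (|ξ| * -y2))).mul_const |y1 - y2|
    simpa using this
  have S1 : Tendsto (fun R : ℝ => ∫ y in y2..y1, g (R + y*I)) atTop (𝓝 0) := by
    apply squeeze_zero_norm' _ hzero
    filter_upwards [eventually_ge_atTop (0:ℝ)] with R hR
    exact hSideBound R hR R (abs_of_nonneg hR)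
  have S2 : Tendsto (fun R : ℝ => ∫ y in y2..y1, g ((↑(-R:ℝ)) + y*I)) atTop (𝓝 0) := by
    apply squeeze_zero_norm' _ hzero
    filter_upwards [eventually_ge_atTop (0:ℝ)] with R hR
    exact hSideBound R hR (-R) (by rw [abs_neg, _root_.abs_of_nonneg hR])
  have TL : Tendsto (fun R : ℝ => (∫ x in (-R)..R, g (x + y2*I)) +
      I • (∫ y in y2..y1, g ((R:ℝ) + y*I)) - I • (∫ y in y2..y1, g ((↑(-R:ℝ)) + y*I))) atTop
      (𝓝 (∫ x : ℝ, g (x + y2*I))) := by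
    have := (T2.add (S1.const_smul I)).sub (S2.const_smul I)
    simpa using this
  have TEq : (fun R : ℝ => (∫ x in (-R)..R, g (x + y2*I)) +
      I • (∫ y in y2..y1, g ((R:ℝ) + y*I)) - I • (∫ y in y2..y1, g ((↑(-R:ℝ)) + y*I)))
      =ᶠ[atTop] (fun R : ℝ => ∫ x in (-R)..R, g (x + y1*I)) := by
    filter_upwards [eventually_ge_atTop (0:ℝ)] with R hR
    have := key R hR
    linear_combination this
  show (∫ x : ℝ, g (↑x + ↑y1*I)) = ∫ x : ℝ, g (↑x + ↑y2*I)
  exact tendsto_nhds_unique T1 (TL.congr' TEq)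


private lemma G_pos_vanish (f : ℂ → ℂ) (M c : ℝ) (hc : 0 < c) (hM : 0 ≤ M)
    (hdiff : DifferentiableOn ℂ f {z : ℂ | z.im < 0})
    (hcont : ContinuousOn f {z : ℂ | z.im ≤ 0})
    (hkey : ∀ z : ℂ, z.im ≤ 0 → ‖f z‖ ≤ M * expR (-c * |z.re|))
    (hexpint : Integrable (fun x : ℝ => expR (-c * |x|)))
    (ξ : ℝ) (hξ : 0 < ξ) :
    (∫ x : ℝ, f (x - I) * Complex.exp ((-I * x) * (ξ:ℂ))) = 0 := by
  set J : ℝ → ℂ := fun y => ∫ x : ℝ, f (x + y*I) * Complex.exp (-I * ξ * (x + y*I)) with hJ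
  have hconst : ∀ y : ℝ, y ≤ -1 → J (-1) = J y := fun y hy =>
    contour_shift f M c ξ hc hM hdiff hcont hkey hexpint (-1) y (by norm_num) hy
  -- bound on ‖J y‖ for y ≤ 0
  set A : ℝ := ∫ x : ℝ, expR (-c * |x|) with hA
  have hbnd : ∀ y : ℝ, y ≤ 0 → ‖J y‖ ≤ (M * expR (ξ * y)) * A := by
    intro y hy
    have h1 : ‖J y‖ ≤ ∫ x : ℝ, (M * expR (ξ * y)) * expR (-c * |x|) := by
      apply norm_integral_le_of_norm_le (hexpint.const_mul _)
      refine Filter.Eventually.of_forall fun x => ?_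
      have h1 : (↑x + ↑y*I).im = y := by simp
      have h2 : (↑x + ↑y*I).re = x := by simp
      rw [norm_mul, Complex.norm_exp]
      have hre : (-I * ↑ξ * (↑x + ↑y*I)).re = ξ * y := by
        simp [Complex.mul_re, Complex.mul_im]
      rw [hre]
      have hf := hkey (↑x + ↑y*I) (by rw [h1]; exact hy)
      rw [h2] at hf
      calc ‖f (↑x + ↑y*I)‖ * expR (ξ * y) ≤ (M * expR (-c * |x|)) * expR (ξ * y) :=
            mul_le_mul_of_nonneg_right hf (le_of_lt (Real.exp_pos _))
        _ = (M * expR (ξ * y)) * expR (-c * |x|) := by ring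
    rwa [integral_const_mul] at h1
  -- J tends to 0 at -infty
  have hJ0 : Tendsto J atBot (𝓝 0) := by
    apply squeeze_zero_norm' _ ?_
    · exact fun y => (M * expR (ξ * y)) * A
    · filter_upwards [eventually_le_atBot (0:ℝ)] with y hy
      exact hbnd y hy
    · have h0 : Tendsto (fun y : ℝ => expR (ξ * y)) atBot (𝓝 0) := by
        apply Real.tendsto_exp_atBot.comp
        exact Tendsto.const_mul_atBot hξ tendsto_id
      have := (h0.const_mul M).mul_const A
      simpa using this
  have hJconst : Tendsto J atBot (𝓝 (J (-1))) := by
    apply tendsto_const_nhds.congr'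
    filter_upwards [eventually_le_atBot (-1:ℝ)] with y hy
    exact hconst y hy
  have hJm1 : J (-1) = 0 := tendsto_nhds_unique hJconst hJ0
  -- rewrite the goal
  have hint : (fun x : ℝ => f (x - I) * Complex.exp ((-I * x) * (ξ:ℂ)))
      = fun x : ℝ => Complex.exp (ξ:ℂ) *
        (f (x + ((-1:ℝ):ℂ)*I) * Complex.exp (-I * ξ * (x + ((-1:ℝ):ℂ)*I))) := by
    funext x
    have h1 : (↑x + ((-1:ℝ):ℂ)*I) = (x:ℂ) - I := by push_cast; ring
    have h2 : Complex.exp (-I * (ξ:ℂ) * ((x:ℂ) - I)) * Complex.exp (ξ:ℂ)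
        = Complex.exp ((-I * (x:ℂ)) * (ξ:ℂ)) := by
      rw [← Complex.exp_add]
      congr 1
      linear_combination (ξ:ℂ) * Complex.I_sq
    rw [h1]
    conv_rhs => rw [mul_comm (Complex.exp (ξ:ℂ)), mul_assoc, h2]
  rw [hint, integral_const_mul,
    show (∫ x : ℝ, f (↑x + ((-1:ℝ):ℂ)*I) * Complex.exp (-I * ↑ξ * (↑x + ((-1:ℝ):ℂ)*I))) = J (-1)
      from rfl, hJm1, mul_zero]


private lemma line_vanish (f : ℂ → ℂ) (M c : ℝ) (hc : 0 < c) (hM : 0 ≤ M)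
    (hdiff : DifferentiableOn ℂ f {z : ℂ | z.im < 0})
    (hcont : ContinuousOn f {z : ℂ | z.im ≤ 0})
    (hkey : ∀ z : ℂ, z.im ≤ 0 → ‖f z‖ ≤ M * expR (-c * |z.re|)) :
    ∀ x : ℝ, f (x - I) = 0 := by
  have hexpint := integrable_exp_neg_mul_abs' hc
  set φ : ℝ → ℂ := fun x => f (x - I) with hφ
  have hmemline : ∀ x : ℝ, ((x:ℂ) - I).im ≤ 0 := by intro x; simp
  have hφc : Continuous φ := by
    apply hcont.comp_continuous
    · exact Complex.continuous_ofReal.sub continuous_const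
    · exact hmemline
  have hφnorm : ∀ x : ℝ, ‖φ x‖ ≤ M * expR (-c * |x|) := by
    intro x
    have := hkey ((x:ℂ) - I) (hmemline x)
    simpa using this
  have hφint : Integrable φ :=
    Integrable.mono' (hexpint.const_mul M) hφc.aestronglyMeasurable
      (Filter.Eventually.of_forall hφnorm)
  -- the Fourier-type transform
  set G : ℂ → ℂ := fun ζ => ∫ x : ℝ, φ x * Complex.exp ((-I * x) * ζ) with hG
  have hGre : ∀ (x : ℝ) (ζ : ℂ), ((-I * (x:ℂ)) * ζ).re = x * ζ.im := by
    intro x ζ; simp [Complex.mul_re, Complex.mul_im]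
  -- strip
  set S : Set ℂ := {ζ : ℂ | -c < ζ.im} ∩ {ζ : ℂ | ζ.im < c} with hS
  have hSopen : IsOpen S :=
    (isOpen_lt continuous_const Complex.continuous_im).inter
      (isOpen_lt Complex.continuous_im continuous_const)
  have hSpre : IsPreconnected S :=
    ((convex_halfSpace_im_gt (-c)).inter (convex_halfSpace_im_lt c)).isPreconnected
  -- analyticity of G on S
  have hGdiff : ∀ ζ₀ ∈ S, DifferentiableAt ℂ G ζ₀ := by
    intro ζ₀ hζ₀
    have hζim : |ζ₀.im| < c := abs_lt.2 ⟨by simpa using hζ₀.1, hζ₀.2⟩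
    set ε : ℝ := (c - |ζ₀.im|) / 2 with hε
    have hεpos : 0 < ε := by simp only [hε]; linarith
    have key := hasDerivAt_integral_of_dominated_loc_of_deriv_le (𝕜 := ℂ)
      (μ := (volume : Measure ℝ))
      (F := fun ζ x => φ x * Complex.exp ((-I * x) * ζ))
      (F' := fun ζ x => φ x * (Complex.exp ((-I * x) * ζ) * (-I * x)))
      (x₀ := ζ₀)
      (bound := fun x => (M * (2/ε)) * expR (-(ε/2) * |x|))
      (Metric.ball_mem_nhds ζ₀ hεpos) ?_ ?_ ?_ ?_ ?_ ?_
    · exact key.2.differentiableAt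
    · refine Filter.Eventually.of_forall fun ζ => ?_
      apply Continuous.aestronglyMeasurable
      exact hφc.mul (Complex.continuous_exp.comp
        ((continuous_const.mul Complex.continuous_ofReal).mul continuous_const))
    · -- integrability of F ζ₀
      refine Integrable.mono' ((integrable_exp_neg_mul_abs' (show (0:ℝ) < 2*ε by linarith)).const_mul M)
        (Continuous.aestronglyMeasurable (hφc.mul (Complex.continuous_exp.comp
          ((continuous_const.mul Complex.continuous_ofReal).mul continuous_const)))) ?_
      refine Filter.Eventually.of_forall fun x => ?_
      rw [norm_mul, Complex.norm_exp, hGre]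
      calc ‖φ x‖ * expR (x * ζ₀.im) ≤ (M * expR (-c * |x|)) * expR (x * ζ₀.im) :=
            mul_le_mul_of_nonneg_right (hφnorm x) (le_of_lt (Real.exp_pos _))
        _ = M * expR (-c * |x| + x * ζ₀.im) := by rw [Real.exp_add]; ring
        _ ≤ M * expR (-(2*ε) * |x|) := by
            apply mul_le_mul_of_nonneg_left _ hM
            apply Real.exp_le_exp.2
            have h1 : x * ζ₀.im ≤ |x| * |ζ₀.im| := by
              calc x * ζ₀.im ≤ |x * ζ₀.im| := le_abs_self _
                _ = |x| * |ζ₀.im| := abs_mul _ _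
            have h2 : 2*ε = c - |ζ₀.im| := by rw [hε]; ring
            nlinarith [abs_nonneg x]
    · exact Continuous.aestronglyMeasurable (hφc.mul ((Complex.continuous_exp.comp
        ((continuous_const.mul Complex.continuous_ofReal).mul continuous_const)).mul
        (continuous_const.mul Complex.continuous_ofReal)))
    · -- bound on derivative on the ball
      refine Filter.Eventually.of_forall fun x => fun ζ hζ => ?_
      have hnormIx : ‖-I * (x:ℂ)‖ = |x| := by
        rw [norm_mul, norm_neg, Complex.norm_I, one_mul, Complex.norm_real, Real.norm_eq_abs]
      have hzim : |ζ.im| < c - ε := by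
        have hd : |ζ.im - ζ₀.im| < ε := by
          calc |ζ.im - ζ₀.im| = |(ζ - ζ₀).im| := by rw [Complex.sub_im]
            _ ≤ ‖ζ - ζ₀‖ := Complex.abs_im_le_norm _
            _ < ε := by rw [← Complex.dist_eq]; exact Metric.mem_ball.1 hζ
        have := abs_sub_abs_le_abs_sub ζ.im ζ₀.im
        have h2 : 2*ε = c - |ζ₀.im| := by rw [hε]; ring
        linarith
      have habs : |x| ≤ (2/ε) * expR ((ε/2) * |x|) := by
        have h3 : (ε/2) * |x| + 1 ≤ expR ((ε/2) * |x|) := Real.add_one_le_exp _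
        have h4 : (ε/2) * |x| ≤ expR ((ε/2) * |x|) := by linarith
        calc |x| = (2/ε) * ((ε/2) * |x|) := by field_simp
          _ ≤ (2/ε) * expR ((ε/2) * |x|) :=
              mul_le_mul_of_nonneg_left h4 (by positivity)
      calc ‖φ x * (Complex.exp ((-I * x) * ζ) * (-I * x))‖
          = ‖φ x‖ * (expR (x * ζ.im) * |x|) := by
            rw [norm_mul, norm_mul, Complex.norm_exp,
              hGre, hnormIx]
        _ ≤ (M * expR (-c * |x|)) * (expR ((c-ε) * |x|) * ((2/ε) * expR ((ε/2) * |x|))) := by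
            apply mul_le_mul (hφnorm x) _ (by positivity) (by positivity)
            apply mul_le_mul _ habs (abs_nonneg _) (le_of_lt (Real.exp_pos _))
            apply Real.exp_le_exp.2
            have h1 : x * ζ.im ≤ |x| * |ζ.im| := by
              calc x * ζ.im ≤ |x * ζ.im| := le_abs_self _
                _ = |x| * |ζ.im| := abs_mul _ _
            nlinarith [abs_nonneg x]
        _ = (M * (2/ε)) * expR (-c * |x| + ((c-ε) * |x| + (ε/2) * |x|)) := by
            rw [Real.exp_add, Real.exp_add]; ring
        _ = (M * (2/ε)) * expR (-(ε/2) * |x|) := by congr 2; ring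
    · exact (integrable_exp_neg_mul_abs' (half_pos hεpos)).const_mul _
    · refine Filter.Eventually.of_forall fun x => fun ζ hζ => ?_
      have h := (((hasDerivAt_id ζ).const_mul (-I * (x:ℂ))).cexp).const_mul (φ x)
      simpa using h
  -- G is analytic on S
  have hGanalytic : AnalyticOnNhd ℂ G S :=
    DifferentiableOn.analyticOnNhd
      (fun ζ hζ => (hGdiff ζ hζ).differentiableWithinAt) hSopen
  have hrealS : ∀ w : ℝ, (w:ℂ) ∈ S := by
    intro w
    constructor
    · show -c < (w:ℂ).im; simp; linarith
    · show (w:ℂ).im < c; simp; linarith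
  have hGz : ∀ ξ : ℝ, 0 < ξ → G ξ = 0 := fun ξ hξ =>
    G_pos_vanish f M c hc hM hdiff hcont hkey hexpint ξ hξ
  have hfreq : ∃ᶠ ζ in 𝓝[≠] (1:ℂ), G ζ = 0 := by
    have htd : Tendsto (fun n : ℕ => (((1 + ((n:ℝ)+1)⁻¹ : ℝ)) : ℂ)) atTop (𝓝[≠] 1) := by
      rw [tendsto_nhdsWithin_iff]
      constructor
      · have h0 : Tendsto (fun n : ℕ => ((n:ℝ)+1)⁻¹) atTop (𝓝 0) := by
          simpa [one_div] using tendsto_one_div_add_atTop_nhds_zero_nat (𝕜 := ℝ)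
        have h1 : Tendsto (fun n : ℕ => (1 + ((n:ℝ)+1)⁻¹ : ℝ)) atTop (𝓝 1) := by
          simpa using tendsto_const_nhds.add h0
        have h2 := (Complex.continuous_ofReal.tendsto 1).comp h1
        rw [Complex.ofReal_one] at h2
        exact h2
      · refine Filter.Eventually.of_forall fun n => ?_
        have hne : (1 + ((n:ℝ)+1)⁻¹ : ℝ) ≠ 1 := by
          have : (0:ℝ) < ((n:ℝ)+1)⁻¹ := by positivity
          linarith
        show ((1 + ((n:ℝ)+1)⁻¹ : ℝ) : ℂ) ∈ {x : ℂ | x ≠ 1}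
        rw [Set.mem_setOf_eq, Ne, ← Complex.ofReal_one, Complex.ofReal_inj]
        exact hne
    refine htd.frequently (Filter.Frequently.of_forall fun n => ?_)
    exact hGz _ (by positivity)
  have hGzero : EqOn G 0 S :=
    hGanalytic.eqOn_zero_of_preconnected_of_frequently_eq_zero hSpre (hrealS 1) hfreq
  -- Fourier transform of φ vanishes
  have hFT : FourierTransform.fourier φ = 0 := by
    funext w
    rw [Real.fourier_real_eq_integral_exp_smul]
    have hcongr : ∀ v : ℝ, Complex.exp (↑(-2 * Real.pi * v * w) * I) • φ v
        = φ v * Complex.exp ((-I * v) * (((2 * Real.pi * w : ℝ)) : ℂ)) := by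
      intro v
      rw [smul_eq_mul, mul_comm]
      congr 1
      push_cast
      ring
    simp_rw [hcongr]
    have := hGzero (hrealS (2 * Real.pi * w))
    simpa [hG] using this
  intro x
  have h'f : Integrable (FourierTransform.fourier φ) := by
    rw [hFT]; exact integrable_zero _ _ _
  have hinv := hφint.fourierInv_fourier_eq h'f (hφc.continuousAt (x := x))
  rw [hFT] at hinv
  show φ x = 0
  rw [← hinv]
  simp [Real.fourierInv_eq]


/-- No-go result: an `f` analytic on the open lower half plane, continuous and bounded on
the closed lower half plane, and exponentially decaying on the real axis, must vanish
identically on the closed lower half plane. -/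
theorem stmt4 (f : ℂ → ℂ) (Ctil c ctil : ℝ)
    (hc : 0 < c) (hctil : 0 < ctil)
    (hdiff : DifferentiableOn ℂ f {z : ℂ | z.im < 0})
    (hcont : ContinuousOn f {z : ℂ | z.im ≤ 0})
    (hbound : ∀ z : ℂ, z.im ≤ 0 → ‖f z‖ ≤ Ctil)
    (hdecay : ∀ k : ℝ, ‖f (k : ℂ)‖ ≤ ctil * Real.exp (-c * |k|)) :
    ∀ z : ℂ, z.im ≤ 0 → f z = 0 := by
  have hM0 : (0:ℝ) ≤ max ctil Ctil := le_trans (le_of_lt hctil) (le_max_left _ _)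
  have hkey := key_decay f Ctil c ctil hc hdiff hcont hbound hdecay
  have hline := line_vanish f (max ctil Ctil) c hc hM0 hdiff hcont hkey
  have hfana : AnalyticOnNhd ℂ f {z : ℂ | z.im < 0} :=
    hdiff.analyticOnNhd (isOpen_lt Complex.continuous_im continuous_const)
  have hpre : IsPreconnected {z : ℂ | z.im < 0} :=
    (convex_halfSpace_im_lt 0).isPreconnected
  have hmem : -I ∈ {z : ℂ | z.im < 0} := by simp
  have hfreq : ∃ᶠ z in 𝓝[≠] (-I), f z = 0 := by
    have htd : Tendsto (fun n : ℕ => ((((n:ℝ)+1)⁻¹ : ℝ) : ℂ) - I) atTop (𝓝[≠] (-I)) := by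
      rw [tendsto_nhdsWithin_iff]
      constructor
      · have h0 : Tendsto (fun n : ℕ => ((n:ℝ)+1)⁻¹) atTop (𝓝 0) := by
          simpa [one_div] using tendsto_one_div_add_atTop_nhds_zero_nat (𝕜 := ℝ)
        have h1 := (Complex.continuous_ofReal.tendsto 0).comp h0
        rw [Complex.ofReal_zero] at h1
        have h2 := h1.sub_const I
        rw [zero_sub] at h2
        exact h2
      · refine Filter.Eventually.of_forall fun n => ?_
        show ((((n:ℝ)+1)⁻¹ : ℝ) : ℂ) - I ∈ {x : ℂ | x ≠ -I}
        rw [Set.mem_setOf_eq]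
        intro hEq
        have : ((((n:ℝ)+1)⁻¹ : ℝ) : ℂ) = 0 := by
          have := sub_eq_iff_eq_add.1 hEq
          simpa using this
        rw [Complex.ofReal_eq_zero] at this
        have hpos : (0:ℝ) < ((n:ℝ)+1)⁻¹ := by positivity
        linarith [this ▸ hpos]
    refine htd.frequently (Filter.Frequently.of_forall fun n => ?_)
    exact hline _
  have hzero : EqOn f 0 {z : ℂ | z.im < 0} :=
    hfana.eqOn_zero_of_preconnected_of_frequently_eq_zero hpre hmem hfreq
  have hclosed : EqOn f 0 {z : ℂ | z.im ≤ 0} := by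
    refine hzero.of_subset_closure hcont continuousOn_const ?_ ?_
    · intro z hz
      simp only [Set.mem_setOf_eq] at hz ⊢
      exact le_of_lt hz
    rw [closure_setOf_im_lt]
  exact fun z hz => hclosed hz
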